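/- For any real numbers u_1, u_2, u_3, u_4, define the positive and negative parts u_i^+ = max(u_i, 0), u_i^- = min(u_i, 0). On a rectangle with h_x, h_y > 0, α > 0, stabilization parameter κ ≥ 0, and η = κ h_x h_y / (2h(h_x + h_y)) for a parameter h > 0, the pure diffusion SWG element bilinear form satisfies: κ S_T(u^-, u^+) + α(∇_w u^-, ∇_w u^+)_T = -η ∑_{i∈{1,2}, j∈{3,4}} (u_i^- u_j^+ + u_j^- u_i^+) - (α h_y²/(h_x h_y) - η)(u_1^- u_2^+ + u_2^- u_1^+) - (α h_x²/(h_x h_y) - η)(u_3^- u_4^+ + u_4^- u_3^+). In particular, if 0 ≤ η ≤ min(α h_y/h_x, α h_x/h_y), then κ S_T(u^-, u^+) + α(∇_w u^-, ∇_w u^+)_T ≥ 0. -/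

import Mathlib

lemma min_mul_max_zero (a : ℝ) : min a 0 * max a 0 = 0 := by
  rcases le_total a 0 with h | h
  · rw [max_eq_right h, mul_zero]
  · rw [min_eq_right h, zero_mul]

/-- Decomposition of the pure-diffusion SWG element bilinear form applied to the
negative and positive parts, and its nonnegativity under the parameter
condition. -/
theorem swg_diffusion_neg_pos_parts
    (hx hy h α κ u1 u2 u3 u4 : ℝ)
    (hhx : 0 < hx) (hhy : 0 < hy) (hh : 0 < h) (hα : 0 < α) (hκ : 0 ≤ κ)
    (η : ℝ) (hη : η = κ * hx * hy / (2 * h * (hx + hy)))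
    (up un : Fin 4 → ℝ)
    (hup : up = fun i => max (![u1, u2, u3, u4] i) 0)
    (hun : un = fun i => min (![u1, u2, u3, u4] i) 0)
    (ST : (Fin 4 → ℝ) → (Fin 4 → ℝ) → ℝ)
    (hST : ∀ v w : Fin 4 → ℝ, ST v w =
      (hx * hy) / (2 * h * (hx + hy)) * (v 0 + v 1 - v 2 - v 3) * (w 0 + w 1 - w 2 - w 3))
    (aT : (Fin 4 → ℝ) → (Fin 4 → ℝ) → ℝ)
    (haT : ∀ v w : Fin 4 → ℝ, aT v w =
      α * (hx * hy) * (((v 1 - v 0) / hx) * ((w 1 - w 0) / hx)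
        + ((v 3 - v 2) / hy) * ((w 3 - w 2) / hy))) :
    (κ * ST un up + aT un up =
      -η * ((un 0 * up 2 + un 0 * up 3 + un 1 * up 2 + un 1 * up 3)
            + (un 2 * up 0 + un 2 * up 1 + un 3 * up 0 + un 3 * up 1))
      - (α * hy ^ 2 / (hx * hy) - η) * (un 0 * up 1 + un 1 * up 0)
      - (α * hx ^ 2 / (hx * hy) - η) * (un 2 * up 3 + un 3 * up 2))
    ∧ (η ≤ min (α * hy / hx) (α * hx / hy) →
        0 ≤ κ * ST un up + aT un up) := by
  have hx0 : hx ≠ 0 := ne_of_gt hhx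
  have hy0 : hy ≠ 0 := ne_of_gt hhy
  have h0 : h ≠ 0 := ne_of_gt hh
  have hsum : hx + hy ≠ 0 := by positivity
  have z0 : un 0 * up 0 = 0 := by
    simp only [hun, hup, Matrix.cons_val_zero]; exact min_mul_max_zero u1
  have z1 : un 1 * up 1 = 0 := by
    simp only [hun, hup, Matrix.cons_val_one, Matrix.head_cons]; exact min_mul_max_zero u2
  have z2 : un 2 * up 2 = 0 := by
    simp only [hun, hup]
    norm_num [min_mul_max_zero]
  have z3 : un 3 * up 3 = 0 := by
    simp only [hun, hup]
    norm_num [min_mul_max_zero]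
  have hun_np : ∀ i, un i ≤ 0 := by intro i; simp [hun]
  have hup_nn : ∀ i, 0 ≤ up i := by intro i; simp [hup]
  have hST' : κ * ST un up =
      η * ((un 0 + un 1 - un 2 - un 3) * (up 0 + up 1 - up 2 - up 3)) := by
    rw [hST, hη]; ring
  have haT' : aT un up = α * hy / hx * ((un 1 - un 0) * (up 1 - up 0))
      + α * hx / hy * ((un 3 - un 2) * (up 3 - up 2)) := by
    rw [haT]; field_simp
  have e1 : α * hy ^ 2 / (hx * hy) = α * hy / hx := by
    field_simp
  have e2 : α * hx ^ 2 / (hx * hy) = α * hx / hy := by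
    field_simp
  have key : κ * ST un up + aT un up =
      -η * ((un 0 * up 2 + un 0 * up 3 + un 1 * up 2 + un 1 * up 3)
            + (un 2 * up 0 + un 2 * up 1 + un 3 * up 0 + un 3 * up 1))
      - (α * hy ^ 2 / (hx * hy) - η) * (un 0 * up 1 + un 1 * up 0)
      - (α * hx ^ 2 / (hx * hy) - η) * (un 2 * up 3 + un 3 * up 2) := by
    rw [hST', haT', e1, e2]
    linear_combination (η + α * hy / hx) * z0 + (η + α * hy / hx) * z1
      + (η + α * hx / hy) * z2 + (η + α * hx / hy) * z3
  refine ⟨key, fun hcond => ?_⟩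
  rw [key, e1, e2]
  have hη0 : 0 ≤ η := by rw [hη]; positivity
  have h1 : η ≤ α * hy / hx := le_trans hcond (min_le_left _ _)
  have h2 : η ≤ α * hx / hy := le_trans hcond (min_le_right _ _)
  have m : ∀ i j, un i * up j ≤ 0 := fun i j =>
    mul_nonpos_of_nonpos_of_nonneg (hun_np i) (hup_nn j)
  nlinarith [m 0 2, m 0 3, m 1 2, m 1 3, m 2 0, m 2 1, m 3 0, m 3 1,
    m 0 1, m 1 0, m 2 3, m 3 2]
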